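/- Let n ≥ 2 and k ≥ 1 be integers with k dividing n, let m = n/k, and let t > 0 be a real number with k ≥ n / (2·(n−1)·t + 1). If C ⊆ {1,…,n} contains exactly one element of each of the k consecutive blocks S_i = {(i−1)·m+1, …, i·m} (i = 1,…,k), then EMD(C) ≤ t; i.e., every cluster built by taking one record per block satisfies t-closeness by design. -/

import Mathlib

open Finset

private lemma gauss_ite_bound (m s : ℕ) (h1 : 1 ≤ s) (h2 : s ≤ m) :
    2 * (∑ r ∈ Ioc 0 m, (if s ≤ r then m - r else r)) ≤ m * (m - 1) := by
  have hsplit : (∑ r ∈ Ioc 0 m, (if s ≤ r then m - r else r))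
      = (∑ r ∈ (Ioc 0 m).filter (fun r => s ≤ r), (m - r))
        + ∑ r ∈ (Ioc 0 m).filter (fun r => ¬ s ≤ r), r := Finset.sum_ite _ _
  have hf1 : (Ioc 0 m).filter (fun r => s ≤ r) = Ico s (m + 1) := by
    ext x; simp; omega
  have hf2 : (Ioc 0 m).filter (fun r => ¬ s ≤ r) = Ico 1 s := by
    ext x; simp; omega
  have hA : ∑ r ∈ Ico s (m + 1), (m - r) = ∑ i ∈ range (m + 1 - s), i := by
    rw [Finset.sum_Ico_eq_sum_range,
        ← Finset.sum_range_reflect (fun i => i) (m + 1 - s)]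
    apply Finset.sum_congr rfl
    intro i hi
    simp only [mem_range] at hi ⊢
    omega
  have hB : ∑ r ∈ Ico 1 s, r = ∑ i ∈ range s, i := by
    rw [Finset.range_eq_Ico]
    rw [← Finset.sum_Ico_consecutive (fun i => i) (Nat.zero_le 1) h1]
    simp
  rw [hsplit, hf1, hf2, hA, hB]
  have g1 := Finset.sum_range_id_mul_two (m + 1 - s)
  have g2 := Finset.sum_range_id_mul_two s
  obtain ⟨a, rfl⟩ := Nat.exists_eq_add_of_le h1
  obtain ⟨b, hb⟩ := Nat.exists_eq_add_of_le h2
  subst hb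
  have e1 : 1 + a + b + 1 - (1 + a) = b + 1 := by omega
  have e2 : b + 1 - 1 = b := by omega
  have e3 : 1 + a + b - 1 = a + b := by omega
  have e4 : 1 + a - 1 = a := by omega
  rw [e1] at g1 ⊢
  rw [e2] at g1
  rw [e3]
  rw [e4] at g2
  nlinarith [g1, g2]

private lemma sum_blocks {M : Type*} [AddCommMonoid M] (g : ℕ → M) (m : ℕ) :
    ∀ k : ℕ, ∑ i ∈ Ioc 0 (k * m), g i = ∑ j ∈ range k, ∑ r ∈ Ioc 0 m, g (j * m + r)
  | 0 => by simp
  | (k + 1) => by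
    rw [Finset.sum_range_succ, ← sum_blocks g m k,
        ← Finset.sum_Ioc_consecutive g (Nat.zero_le (k * m))
          (by nlinarith : k * m ≤ (k + 1) * m)]
    congr 1
    have h : Ioc (k * m) ((k + 1) * m) = map (addLeftEmbedding (k * m)) (Ioc 0 m) := by
      rw [Finset.map_add_left_Ioc]
      congr 1 <;> ring
    rw [h, Finset.sum_map]
    rfl

/-- The Earth Mover's Distance (with the ordered distance) between the uniform
distribution on a cluster `C ⊆ {1,…,n}` of `k` records and the uniform
distribution on the whole data set `{1,…,n}`. -/
noncomputable def EMD (n k : ℕ) (C : Finset ℕ) : ℝ :=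
  (1 / ((n : ℝ) - 1)) * ∑ i ∈ Finset.Icc 1 n,
    |∑ j ∈ Finset.Icc 1 i, ((if j ∈ C then (1 : ℝ) / k else 0) - 1 / n)|

/-- If `k ∣ n`, `m = n/k`, `t > 0` with `k ≥ n/(2(n−1)t+1)`, then every
cluster `C ⊆ {1,…,n}` containing exactly one element of each consecutive
block `S_i = {(i−1)m+1, …, im}` satisfies `EMD(C) ≤ t`, i.e. it satisfies
`t`-closeness by design. -/
theorem one_record_per_block_is_t_close (n k m : ℕ) (hn : 2 ≤ n) (hk : 1 ≤ k)
    (hdvd : k ∣ n) (hm : m = n / k) (t : ℝ) (ht : 0 < t)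
    (hkt : (n : ℝ) / (2 * ((n : ℝ) - 1) * t + 1) ≤ (k : ℝ))
    (C : Finset ℕ) (hC : C ⊆ Finset.Icc 1 n)
    (hone : ∀ i ∈ Finset.Icc 1 k,
      (C ∩ Finset.Icc ((i - 1) * m + 1) (i * m)).card = 1)
    (hcard : C.card = k) :
    EMD n k C ≤ t := by
  classical
  have hk0 : 0 < k := hk
  have hnm : k * m = n := by rw [hm, Nat.mul_div_cancel' hdvd]
  have hm1 : 1 ≤ m := by
    rcases Nat.eq_zero_or_pos m with h | h
    · subst h; simp at hnm; omega
    · exact h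
  have hN1 : (0 : ℝ) < (n : ℝ) - 1 := by
    have : (2 : ℝ) ≤ (n : ℝ) := by exact_mod_cast hn
    linarith
  have hK : (0 : ℝ) < (k : ℝ) := Nat.cast_pos.mpr hk0
  have hM : (0 : ℝ) < (m : ℝ) := Nat.cast_pos.mpr hm1
  have hNr : (n : ℝ) = (k : ℝ) * (m : ℝ) := by exact_mod_cast hnm.symm
  have hN0 : (0 : ℝ) < (n : ℝ) := by rw [hNr]; positivity
  -- blocks in `Ioc` form
  have hone' : ∀ j < k, (C ∩ Ioc (j * m) ((j + 1) * m)).card = 1 := by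
    intro j hj
    have h := hone (j + 1) (by simp [Finset.mem_Icc]; omega)
    have e : (j + 1 - 1) = j := by omega
    rw [e] at h
    rw [← Finset.Icc_add_one_left_eq_Ioc]
    exact h
  -- prefix counts at block boundaries
  have hcount : ∀ j ≤ k, (C ∩ Ioc 0 (j * m)).card = j := by
    intro j
    induction j with
    | zero => intro _; simp
    | succ j ih =>
      intro hjk
      have h1 := ih (by omega)
      have h2 := hone' j (by omega)
      have hun : C ∩ Ioc 0 ((j + 1) * m)
          = (C ∩ Ioc 0 (j * m)) ∪ (C ∩ Ioc (j * m) ((j + 1) * m)) := by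
        rw [← Finset.inter_union_distrib_left,
            Finset.Ioc_union_Ioc_eq_Ioc (Nat.zero_le _) (by nlinarith)]
      have hdisj : Disjoint (C ∩ Ioc 0 (j * m)) (C ∩ Ioc (j * m) ((j + 1) * m)) := by
        apply Finset.disjoint_left.mpr
        intro x hx hx'
        simp only [Finset.mem_inter, Finset.mem_Ioc] at hx hx'
        omega
      rw [hun, Finset.card_union_of_disjoint hdisj, h1, h2]
  -- closed form of the inner (signed) sums
  have hIoc : ∀ i : ℕ, Finset.Icc 1 i = Finset.Ioc 0 i := by
    intro i; ext x; simp; omega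
  have hinner : ∀ i : ℕ, ∑ j ∈ Icc 1 i, ((if j ∈ C then (1 : ℝ) / k else 0) - 1 / n)
      = ((C ∩ Ioc 0 i).card : ℝ) / k - (i : ℝ) / n := by
    intro i
    rw [hIoc i, Finset.sum_sub_distrib, Finset.sum_ite_mem, Finset.inter_comm,
        Finset.sum_const, Finset.sum_const, Nat.card_Ioc, nsmul_eq_mul, nsmul_eq_mul]
    simp only [Nat.sub_zero]
    ring
  set g : ℕ → ℝ := fun i =>
    |∑ j ∈ Finset.Icc 1 i, ((if j ∈ C then (1 : ℝ) / k else 0) - 1 / n)| with hg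
  -- block-by-block bound
  have hblock : ∀ j < k, ∑ r ∈ Ioc 0 m, g (j * m + r)
      ≤ ((m : ℝ) * ((m : ℝ) - 1) / 2) / n := by
    intro j hj
    have hjm : (j + 1) * m = j * m + m := by ring
    obtain ⟨c, hc⟩ := Finset.card_eq_one.mp (hone' j hj)
    have hcmem : c ∈ Ioc (j * m) ((j + 1) * m) := by
      have : c ∈ C ∩ Ioc (j * m) ((j + 1) * m) := by rw [hc]; simp
      exact (Finset.mem_inter.mp this).2
    rw [Finset.mem_Ioc, hjm] at hcmem
    obtain ⟨s, rfl⟩ : ∃ s, c = j * m + s := ⟨c - j * m, by omega⟩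
    have hs1 : 1 ≤ s := by omega
    have hsm : s ≤ m := by omega
    have hval : ∀ r ∈ Ioc 0 m,
        g (j * m + r) = (if s ≤ r then ((m : ℝ) - r) else (r : ℝ)) / n := by
      intro r hr
      rw [Finset.mem_Ioc] at hr
      have hcnt : (C ∩ Ioc 0 (j * m + r)).card = j + (if s ≤ r then 1 else 0) := by
        have hsplit : C ∩ Ioc 0 (j * m + r)
            = (C ∩ Ioc 0 (j * m)) ∪ (C ∩ Ioc (j * m) (j * m + r)) := by
          rw [← Finset.inter_union_distrib_left,
              Finset.Ioc_union_Ioc_eq_Ioc (Nat.zero_le _) (Nat.le_add_right _ _)]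
        have hdisj : Disjoint (C ∩ Ioc 0 (j * m)) (C ∩ Ioc (j * m) (j * m + r)) := by
          apply Finset.disjoint_left.mpr
          intro x hx hx'
          simp only [Finset.mem_inter, Finset.mem_Ioc] at hx hx'
          omega
        have htail : C ∩ Ioc (j * m) (j * m + r)
            = if s ≤ r then {j * m + s} else ∅ := by
          have hsub : C ∩ Ioc (j * m) (j * m + r)
              = (C ∩ Ioc (j * m) ((j + 1) * m)).filter (fun x => x ≤ j * m + r) := by
            ext x
            simp only [Finset.mem_inter, Finset.mem_Ioc, Finset.mem_filter, hjm]
            constructor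
            · rintro ⟨hxC, h1, h2⟩
              exact ⟨⟨hxC, h1, by omega⟩, h2⟩
            · rintro ⟨⟨hxC, h1, _⟩, h2⟩
              exact ⟨hxC, h1, h2⟩
          rw [hsub, hc, Finset.filter_singleton]
          by_cases h : s ≤ r
          · rw [if_pos (by omega : j * m + s ≤ j * m + r), if_pos h]
          · rw [if_neg (by omega : ¬ j * m + s ≤ j * m + r), if_neg h]
        rw [hsplit, Finset.card_union_of_disjoint hdisj, hcount j (le_of_lt hj), htail]
        by_cases h : s ≤ r
        · rw [if_pos h, if_pos h]; simp
        · rw [if_neg h, if_neg h]; simp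
      rw [hg]
      simp only
      rw [hinner, hcnt]
      by_cases h : s ≤ r
      · rw [if_pos h, if_pos h]
        have e : ((j + 1 : ℕ) : ℝ) / k - ((j * m + r : ℕ) : ℝ) / n
            = ((m : ℝ) - r) / n := by
          push_cast
          rw [hNr]
          field_simp
          ring
        push_cast at e ⊢
        rw [e]
        apply abs_of_nonneg
        apply div_nonneg _ (le_of_lt hN0)
        have : (r : ℝ) ≤ (m : ℝ) := by exact_mod_cast hr.2
        linarith
      · rw [if_neg h, if_neg h]
        have e : ((j + 0 : ℕ) : ℝ) / k - ((j * m + r : ℕ) : ℝ) / n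
            = -((r : ℝ) / n) := by
          push_cast
          rw [hNr]
          field_simp
          ring
        push_cast at e ⊢
        rw [e, abs_neg]
        apply abs_of_nonneg
        positivity
    rw [Finset.sum_congr rfl hval, ← Finset.sum_div]
    have hnum : (∑ r ∈ Ioc 0 m, (if s ≤ r then ((m : ℝ) - r) else (r : ℝ)))
        ≤ (m : ℝ) * ((m : ℝ) - 1) / 2 := by
      have hcast : (∑ r ∈ Ioc 0 m, (if s ≤ r then ((m : ℝ) - r) else (r : ℝ)))
          = ((∑ r ∈ Ioc 0 m, (if s ≤ r then m - r else r) : ℕ) : ℝ) := by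
        rw [Nat.cast_sum]
        apply Finset.sum_congr rfl
        intro r hr
        rw [Finset.mem_Ioc] at hr
        by_cases h : s ≤ r
        · rw [if_pos h, if_pos h, Nat.cast_sub hr.2]
        · rw [if_neg h, if_neg h]
      rw [hcast]
      have hnat := gauss_ite_bound m s hs1 hsm
      set X : ℕ := ∑ r ∈ Ioc 0 m, (if s ≤ r then m - r else r) with hX
      have h2 : ((2 * X : ℕ) : ℝ) ≤ ((m * (m - 1) : ℕ) : ℝ) := Nat.cast_le.mpr hnat
      push_cast [Nat.cast_sub hm1] at h2
      linarith
    exact div_le_div_of_nonneg_right hnum hN0.le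
  -- total bound
  have hsum : ∑ i ∈ Ioc 0 n, g i ≤ ((m : ℝ) - 1) / 2 := by
    rw [← hnm, sum_blocks g m k]
    calc ∑ j ∈ range k, ∑ r ∈ Ioc 0 m, g (j * m + r)
        ≤ ∑ _j ∈ range k, ((m : ℝ) * ((m : ℝ) - 1) / 2) / n :=
          Finset.sum_le_sum (fun j hj => hblock j (Finset.mem_range.mp hj))
      _ = (k : ℝ) * (((m : ℝ) * ((m : ℝ) - 1) / 2) / n) := by
          rw [Finset.sum_const, Finset.card_range, nsmul_eq_mul]
      _ = ((m : ℝ) - 1) / 2 := by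
          rw [hNr]
          field_simp
  -- final arithmetic
  have hd : (0 : ℝ) < 2 * ((n : ℝ) - 1) * t + 1 := by positivity
  have h1 : (n : ℝ) ≤ (k : ℝ) * (2 * ((n : ℝ) - 1) * t + 1) := by
    rw [div_le_iff₀ hd] at hkt
    linarith
  have h2 : (m : ℝ) ≤ 2 * ((n : ℝ) - 1) * t + 1 := by
    have h1' : (k : ℝ) * (m : ℝ) ≤ (k : ℝ) * (2 * ((n : ℝ) - 1) * t + 1) := by
      rw [← hNr]; exact h1
    exact le_of_mul_le_mul_left h1' hK
  have h3 : ((m : ℝ) - 1) / 2 ≤ ((n : ℝ) - 1) * t := by linarith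
  show (1 / ((n : ℝ) - 1)) * ∑ i ∈ Finset.Icc 1 n, g i ≤ t
  rw [hIoc n]
  calc (1 / ((n : ℝ) - 1)) * ∑ i ∈ Ioc 0 n, g i
      ≤ (1 / ((n : ℝ) - 1)) * (((m : ℝ) - 1) / 2) := by
        apply mul_le_mul_of_nonneg_left hsum (by positivity)
    _ ≤ (1 / ((n : ℝ) - 1)) * (((n : ℝ) - 1) * t) := by
        apply mul_le_mul_of_nonneg_left h3 (by positivity)
    _ = t := by field_simp
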